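/- For every real number s with 0 < s < 2, the function h_s is integrable on the interval (1/2, 1) and lim_{r→∞} S_r(s) / ( (2r+1)^{2−s} · ln(2r+1) ) = s · ∫_{1/2}^{1} h_s(x) dx, where the limit is taken over positive integers r. -/

import Mathlib

open Filter Finset MeasureTheory Topology

lemma aux_int (a : ℝ) (ha : a < 1) :
    IntegrableOn (fun x : ℝ => (1 - x) ^ (-a)) (Set.Ioo (1/4:ℝ) 1) := by
  have h1 : IntervalIntegrable (fun x : ℝ => x ^ (-a)) volume 0 (3/4) :=
    intervalIntegral.intervalIntegrable_rpow' (by linarith)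
  have h2 := h1.comp_sub_left 1
  norm_num at h2
  rw [intervalIntegrable_iff] at h2
  rw [Set.uIoc_of_ge (by norm_num : (1/4:ℝ) ≤ 1)] at h2
  exact h2.mono_set Set.Ioo_subset_Ioc_self

-- unique cell membership: x in cell p and cell q forces p = q
lemma cell_unique {r p q : ℕ} (x : ℝ)
    (hxp : x ∈ Set.Ioc (((p:ℝ)-1)/(2*(r:ℝ)+1)) ((p:ℝ)/(2*(r:ℝ)+1)))
    (hxq : x ∈ Set.Ioc (((q:ℝ)-1)/(2*(r:ℝ)+1)) ((q:ℝ)/(2*(r:ℝ)+1))) : p = q := by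
  have hn : (0:ℝ) < 2*(r:ℝ)+1 := by positivity
  obtain ⟨hp1, hp2⟩ := hxp
  obtain ⟨hq1, hq2⟩ := hxq
  rw [div_lt_iff₀ hn] at hp1 hq1
  rw [le_div_iff₀ hn] at hp2 hq2
  have h1 : (p:ℝ) < (q:ℝ) + 1 := by nlinarith
  have h2 : (q:ℝ) < (p:ℝ) + 1 := by nlinarith
  have h1' : p < q + 1 := by exact_mod_cast h1
  have h2' : q < p + 1 := by exact_mod_cast h2
  omega

lemma step_eval (F : ℝ → ℝ) (r p : ℕ) (hp : p ∈ Finset.Icc (r+1) (2*r))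
    (x : ℝ) (hx : x ∈ Set.Ioc (((p:ℝ)-1)/(2*(r:ℝ)+1)) ((p:ℝ)/(2*(r:ℝ)+1))) :
    (∑ q ∈ Finset.Icc (r+1) (2*r),
      Set.indicator (Set.Ioc (((q:ℝ)-1)/(2*(r:ℝ)+1)) ((q:ℝ)/(2*(r:ℝ)+1)))
        (fun _ => F ((q:ℝ)/(2*(r:ℝ)+1))) x)
    = F ((p:ℝ)/(2*(r:ℝ)+1)) := by
  rw [Finset.sum_eq_single_of_mem p hp]
  · exact Set.indicator_of_mem hx _
  · intro q _ hqp
    apply Set.indicator_of_notMem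
    intro hxq
    exact hqp (cell_unique x hxq hx)

lemma ceil_mem (r : ℕ) (hr : 1 ≤ r) (x : ℝ) (hx1 : 1/2 < x)
    (hx2 : x * (2*(r:ℝ)+1) ≤ 2*(r:ℝ)) :
    ⌈(2*(r:ℝ)+1) * x⌉₊ ∈ Finset.Icc (r+1) (2*r) ∧
    x ∈ Set.Ioc (((⌈(2*(r:ℝ)+1) * x⌉₊:ℝ)-1)/(2*(r:ℝ)+1)) ((⌈(2*(r:ℝ)+1) * x⌉₊:ℝ)/(2*(r:ℝ)+1)) := by
  have hn : (0:ℝ) < 2*(r:ℝ)+1 := by positivity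
  set n : ℝ := 2*(r:ℝ)+1 with hndef
  have hnx : (0:ℝ) ≤ n * x := by nlinarith
  have hle : n * x ≤ (⌈n * x⌉₊ : ℝ) := Nat.le_ceil _
  have hlt : (⌈n * x⌉₊ : ℝ) < n * x + 1 := Nat.ceil_lt_add_one hnx
  constructor
  · rw [Finset.mem_Icc]
    constructor
    · have : (r:ℝ) < n * x := by nlinarith
      have := Nat.lt_ceil.2 this
      omega
    · have : n * x ≤ ((2*r : ℕ) : ℝ) := by push_cast; nlinarith
      exact Nat.ceil_le.2 this
  · constructor
    · rw [div_lt_iff₀ hn]; nlinarith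
    · rw [le_div_iff₀ hn]; nlinarith

set_option maxHeartbeats 1600000 in
lemma riemann (F : ℝ → ℝ) (K a : ℝ) (hK : 0 ≤ K) (ha0 : 0 ≤ a) (ha1 : a < 1)
    (hFc : ∀ x ∈ Set.Ioo (1/2:ℝ) 1, ContinuousAt F x)
    (hFb : ∀ y ∈ Set.Ioo (1/2:ℝ) 1, |F y| ≤ K * (1-y) ^ (-a)) :
    IntegrableOn F (Set.Ioo (1/2:ℝ) 1) ∧
    Tendsto (fun r : ℕ => (∑ p ∈ Finset.Icc (r+1) (2*r), F ((p:ℝ) / (2*(r:ℝ)+1))) / (2*(r:ℝ)+1))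
      atTop (𝓝 (∫ x in Set.Ioo (1/2:ℝ) 1, F x)) := by
  have haux := aux_int a ha1
  -- integrability of F
  have hint : IntegrableOn F (Set.Ioo (1/2:ℝ) 1) := by
    apply Integrable.mono' (g := fun x => K * (1-x) ^ (-a))
    · exact ((haux.mono_set (Set.Ioo_subset_Ioo (by norm_num) le_rfl)).const_mul K)
    · exact ContinuousOn.aestronglyMeasurable
        (fun x hx => (hFc x hx).continuousWithinAt) measurableSet_Ioo
    · exact (ae_restrict_iff' measurableSet_Ioo).2 (ae_of_all _ fun x hx => by
        simpa [Real.norm_eq_abs] using hFb x hx)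
  refine ⟨hint, ?_⟩
  set fr : ℕ → ℝ → ℝ := fun r x => ∑ p ∈ Finset.Icc (r+1) (2*r),
      Set.indicator (Set.Ioc (((p:ℝ)-1)/(2*(r:ℝ)+1)) ((p:ℝ)/(2*(r:ℝ)+1)))
        (fun _ => F ((p:ℝ)/(2*(r:ℝ)+1))) x with hfr
  have hfr_int : ∀ r, Integrable (fr r) := by
    intro r
    apply integrable_finset_sum
    intro p _
    rw [integrable_indicator_iff measurableSet_Ioc]
    exact integrableOn_const measure_Ioc_lt_top.ne
  -- the dominating function
  set G : ℝ → ℝ := Set.indicator (Set.Ioo (1/4:ℝ) 1) (fun x => K * 2^a * (1-x)^(-a)) with hG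
  have hGint : Integrable G := by
    rw [hG, integrable_indicator_iff measurableSet_Ioo]
    exact haux.const_mul _
  -- pointwise bound
  have hbound : ∀ᶠ r in atTop, ∀ᵐ x, ‖fr r x‖ ≤ G x := by
    filter_upwards [eventually_ge_atTop 1] with r hr
    apply ae_of_all
    intro x
    have hn : (0:ℝ) < 2*(r:ℝ)+1 := by positivity
    by_cases hex : ∃ p ∈ Finset.Icc (r+1) (2*r),
        x ∈ Set.Ioc (((p:ℝ)-1)/(2*(r:ℝ)+1)) ((p:ℝ)/(2*(r:ℝ)+1))
    · obtain ⟨p, hp, hxp⟩ := hex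
      have heval : fr r x = F ((p:ℝ)/(2*(r:ℝ)+1)) := step_eval F r p hp x hxp
      obtain ⟨hp1, hp2⟩ := Finset.mem_Icc.1 hp
      have hp1' : (r:ℝ) + 1 ≤ (p:ℝ) := by exact_mod_cast hp1
      have hp2' : (p:ℝ) ≤ 2*(r:ℝ) := by exact_mod_cast hp2
      have hr' : (1:ℝ) ≤ (r:ℝ) := by exact_mod_cast hr
      obtain ⟨hx1, hx2⟩ := hxp
      rw [div_lt_iff₀ hn] at hx1
      rw [le_div_iff₀ hn] at hx2
      have hy1 : 1/2 < (p:ℝ)/(2*(r:ℝ)+1) := by rw [lt_div_iff₀ hn]; nlinarith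
      have hy2 : (p:ℝ)/(2*(r:ℝ)+1) < 1 := by rw [div_lt_one hn]; nlinarith
      have hxmem : x ∈ Set.Ioo (1/4:ℝ) 1 := by
        constructor
        · nlinarith
        · nlinarith
      have hGx : G x = K * 2^a * (1-x)^(-a) := Set.indicator_of_mem hxmem _
      have hFy := hFb _ ⟨hy1, hy2⟩
      have hhalf : (1-x)/2 ≤ 1 - (p:ℝ)/(2*(r:ℝ)+1) := by
        have heq : 1 - (p:ℝ)/(2*(r:ℝ)+1) = (2*(r:ℝ)+1-(p:ℝ))/(2*(r:ℝ)+1) := by field_simp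
        rw [heq, div_le_div_iff₀ (by norm_num) hn]
        nlinarith
      have hxlt1 : x < 1 := hxmem.2
      have hpos : (0:ℝ) < (1-x)/2 := by linarith
      have hmon : (1 - (p:ℝ)/(2*(r:ℝ)+1))^(-a) ≤ ((1-x)/2)^(-a) :=
        Real.rpow_le_rpow_of_nonpos hpos hhalf (neg_nonpos.2 ha0)
      have he1 : ((1-x)/2)^(-a) = (1-x)^(-a) / 2^(-a) :=
        Real.div_rpow (by linarith : (0:ℝ) ≤ 1-x) (by norm_num : (0:ℝ) ≤ 2) (-a)
      have he2 : (2:ℝ)^(-a) = ((2:ℝ)^a)⁻¹ := Real.rpow_neg (by norm_num) a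
      have he3 : ((1-x)/2)^(-a) = 2^a * (1-x)^(-a) := by
        rw [he1, he2]; field_simp
      rw [heval, hGx, Real.norm_eq_abs]
      calc |F ((p:ℝ)/(2*(r:ℝ)+1))| ≤ K * (1 - (p:ℝ)/(2*(r:ℝ)+1))^(-a) := hFy
        _ ≤ K * (2^a * (1-x)^(-a)) := by
            apply mul_le_mul_of_nonneg_left _ hK
            rw [← he3]; exact hmon
        _ = K * 2^a * (1-x)^(-a) := by ring
    · push_neg at hex
      have : fr r x = 0 := Finset.sum_eq_zero fun p hp => Set.indicator_of_notMem (hex p hp) _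
      rw [this, norm_zero, hG]
      exact Set.indicator_nonneg (fun y hy => mul_nonneg (by positivity)
        (Real.rpow_nonneg (by linarith [hy.2]) _)) x
  -- a.e. pointwise convergence
  have hae : ∀ᵐ x : ℝ, x ≠ (1/2:ℝ) := by
    rw [MeasureTheory.ae_iff]
    have : {x : ℝ | ¬ x ≠ (1/2:ℝ)} = {(1/2:ℝ)} := by ext y; simp
    rw [this]
    exact measure_singleton _
  have hlim : ∀ᵐ x : ℝ, Tendsto (fun r => fr r x) atTop
      (𝓝 (Set.indicator (Set.Ioo (1/2:ℝ) 1) F x)) := by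
    filter_upwards [hae] with x hx
    rcases lt_or_gt_of_ne hx with hxlt | hxgt
    · -- x < 1/2 : eventually 0
      have : ∀ᶠ r in atTop, fr r x = 0 := by
        filter_upwards [eventually_ge_atTop (⌈x/(1-2*x)⌉₊ + 1)] with r hr
        apply Finset.sum_eq_zero
        intro p hp
        apply Set.indicator_of_notMem
        intro hxp
        have hn : (0:ℝ) < 2*(r:ℝ)+1 := by positivity
        obtain ⟨hp1, _⟩ := Finset.mem_Icc.1 hp
        have hp1' : (r:ℝ) + 1 ≤ (p:ℝ) := by exact_mod_cast hp1
        have h1 := hxp.1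
        rw [div_lt_iff₀ hn] at h1
        -- x * (2r+1) > p - 1 ≥ r, but x < 1/2 gives r large contradiction
        have hrge : (⌈x/(1-2*x)⌉₊ : ℝ) + 1 ≤ (r:ℝ) := by exact_mod_cast hr
        have hceil : x/(1-2*x) ≤ (⌈x/(1-2*x)⌉₊ : ℝ) := Nat.le_ceil _
        have hden : (0:ℝ) < 1-2*x := by linarith
        rw [div_le_iff₀ hden] at hceil
        nlinarith
      refine Tendsto.congr' (EventuallyEq.symm this) ?_
      have : Set.indicator (Set.Ioo (1/2:ℝ) 1) F x = 0 :=
        Set.indicator_of_notMem (by intro h; exact absurd h.1 (by linarith)) _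
      rw [this]; exact tendsto_const_nhds
    rcases le_or_gt 1 x with hxge | hxlt1
    · -- x ≥ 1 : always 0
      have : ∀ r : ℕ, fr r x = 0 := by
        intro r
        apply Finset.sum_eq_zero
        intro p hp
        apply Set.indicator_of_notMem
        intro hxp
        have hn : (0:ℝ) < 2*(r:ℝ)+1 := by positivity
        obtain ⟨_, hp2⟩ := Finset.mem_Icc.1 hp
        have hp2' : (p:ℝ) ≤ 2*(r:ℝ) := by exact_mod_cast hp2
        have h2 := hxp.2
        rw [le_div_iff₀ hn] at h2
        nlinarith
      rw [show Set.indicator (Set.Ioo (1/2:ℝ) 1) F x = 0 from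
        Set.indicator_of_notMem (by intro h; exact absurd h.2 (by linarith)) _]
      exact Tendsto.congr (fun r => (this r).symm) tendsto_const_nhds
    · -- 1/2 < x < 1
      have hxmem : x ∈ Set.Ioo (1/2:ℝ) 1 := ⟨hxgt, hxlt1⟩
      rw [Set.indicator_of_mem hxmem]
      -- eventually fr r x = F (ceil/n)
      have hev : ∀ᶠ r in atTop, fr r x = F ((⌈(2*(r:ℝ)+1) * x⌉₊ : ℝ)/(2*(r:ℝ)+1)) := by
        filter_upwards [eventually_ge_atTop (⌈x/(2*(1-x))⌉₊ + 1)] with r hr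
        have hr1 : 1 ≤ r := le_trans (Nat.le_add_left 1 _) hr
        have hrge : (⌈x/(2*(1-x))⌉₊ : ℝ) + 1 ≤ (r:ℝ) := by exact_mod_cast hr
        have hceil : x/(2*(1-x)) ≤ (⌈x/(2*(1-x))⌉₊ : ℝ) := Nat.le_ceil _
        have hden : (0:ℝ) < 2*(1-x) := by linarith
        rw [div_le_iff₀ hden] at hceil
        have hx2 : x * (2*(r:ℝ)+1) ≤ 2*(r:ℝ) := by nlinarith
        obtain ⟨hmem, hxIoc⟩ := ceil_mem r hr1 x hxgt hx2
        exact step_eval F r _ hmem x hxIoc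
      have hy : Tendsto (fun r : ℕ => (⌈(2*(r:ℝ)+1) * x⌉₊ : ℝ)/(2*(r:ℝ)+1)) atTop (𝓝 x) := by
        have hub : ∀ r : ℕ, (⌈(2*(r:ℝ)+1) * x⌉₊ : ℝ)/(2*(r:ℝ)+1) ≤ x + 1/(2*(r:ℝ)+1) := by
          intro r
          have hn : (0:ℝ) < 2*(r:ℝ)+1 := by positivity
          rw [div_le_iff₀ hn]
          have h1 := Nat.ceil_lt_add_one (show (0:ℝ) ≤ (2*(r:ℝ)+1) * x by nlinarith)
          have hexp : (x + 1/(2*(r:ℝ)+1)) * (2*(r:ℝ)+1) = x*(2*(r:ℝ)+1) + 1 := by field_simp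
          linarith [h1, hexp, mul_comm x (2*(r:ℝ)+1)]
        have hlb : ∀ r : ℕ, x ≤ (⌈(2*(r:ℝ)+1) * x⌉₊ : ℝ)/(2*(r:ℝ)+1) := by
          intro r
          have hn : (0:ℝ) < 2*(r:ℝ)+1 := by positivity
          rw [le_div_iff₀ hn]
          have h1 := Nat.le_ceil ((2*(r:ℝ)+1) * x)
          linarith [h1, mul_comm x (2*(r:ℝ)+1)]
        have h2 : Tendsto (fun r : ℕ => (2*(r:ℝ)+1)) atTop atTop :=
          tendsto_atTop_add_const_right _ 1 ((tendsto_natCast_atTop_atTop (R := ℝ)).const_mul_atTop (by norm_num : (0:ℝ) < 2))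
        have htail : Tendsto (fun r : ℕ => x + 1/(2*(r:ℝ)+1)) atTop (𝓝 (x + 0)) :=
          tendsto_const_nhds.add (by simp only [one_div]; exact h2.inv_tendsto_atTop)
        rw [add_zero] at htail
        exact tendsto_of_tendsto_of_tendsto_of_le_of_le tendsto_const_nhds htail hlb hub
      exact Tendsto.congr' (hev.mono fun r h => h.symm) (((hFc x hxmem).tendsto).comp hy)
  have hmeas : ∀ᶠ r in atTop, AEStronglyMeasurable (fr r) volume :=
    Eventually.of_forall fun r => (hfr_int r).aestronglyMeasurable
  have hDCT := MeasureTheory.tendsto_integral_filter_of_dominated_convergence G hmeas hbound hGint hlim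
  rw [MeasureTheory.integral_indicator measurableSet_Ioo] at hDCT
  refine Tendsto.congr (fun r => ?_) hDCT
  have hn : (0:ℝ) < 2*(r:ℝ)+1 := by positivity
  rw [hfr]
  rw [MeasureTheory.integral_finset_sum _ (fun p _ => by
    rw [integrable_indicator_iff measurableSet_Ioc]
    exact integrableOn_const measure_Ioc_lt_top.ne)]
  rw [Finset.sum_div]
  apply Finset.sum_congr rfl
  intro p _
  rw [MeasureTheory.integral_indicator_const _ measurableSet_Ioc]
  rw [measureReal_def, Real.volume_Ioc]
  have : (p:ℝ)/(2*(r:ℝ)+1) - ((p:ℝ)-1)/(2*(r:ℝ)+1) = 1/(2*(r:ℝ)+1) := by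
    field_simp
    ring
  rw [this, ENNReal.toReal_ofReal (by positivity)]
  rw [smul_eq_mul]
  field_simp

lemma quarter_rpow (c : ℝ) : ((1:ℝ)/4) ^ (-c) = 4 ^ c := by
  rw [one_div, Real.inv_rpow (by norm_num : (0:ℝ) ≤ 4),
     Real.rpow_neg (by norm_num : (0:ℝ) ≤ 4), inv_inv]

lemma rpow_le_four {t : ℝ} (c : ℝ) (h1 : 1/4 ≤ t) (hc : 0 ≤ c) : t ^ (-c) ≤ 4 ^ c := by
  calc t^(-c) ≤ ((1:ℝ)/4)^(-c) :=
        Real.rpow_le_rpow_of_nonpos (by norm_num) h1 (neg_nonpos.2 hc)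
    _ = 4^c := quarter_rpow c

lemma mvt_pair (f f' : ℝ → ℝ) (M : ℝ)
    (hd : ∀ t ∈ Set.Icc (1/4:ℝ) (3/4), HasDerivAt f (f' t) t)
    (hb : ∀ t ∈ Set.Icc (1/4:ℝ) (3/4), |f' t| ≤ M)
    {y : ℝ} (hy1 : 1/2 < y) (hy2 : y ≤ 3/4) :
    |f y - f (1-y)| ≤ M * (2*y - 1) := by
  have h := Convex.norm_image_sub_le_of_norm_hasDerivWithin_le
    (fun t ht => (hd t ht).hasDerivWithinAt)
    (fun t ht => by simpa [Real.norm_eq_abs] using hb t ht)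
    (convex_Icc (1/4:ℝ) (3/4))
    (⟨by linarith, by linarith⟩ : (1-y) ∈ Set.Icc (1/4:ℝ) (3/4))
    (⟨by linarith, hy2⟩ : y ∈ Set.Icc (1/4:ℝ) (3/4))
  rw [Real.norm_eq_abs, Real.norm_eq_abs] at h
  have he : |y - (1-y)| = 2*y - 1 := by
    rw [abs_of_nonneg (by linarith)]; ring
  rw [he] at h
  exact h

lemma hfun_bound (s : ℝ) (hs0 : 0 < s) (hs2 : s < 2) :
    ∃ K, 0 ≤ K ∧ ∀ y ∈ Set.Ioo (1/2:ℝ) 1,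
      |y*(1-y)/(2*y-1) * (y^(-s) - (1-y)^(-s))| ≤ K * (1-y)^(-(s/2)) := by
  set M : ℝ := s * 4^(s+1) with hM
  have hM0 : 0 ≤ M := by positivity
  refine ⟨M + 4^s + 2, by positivity, ?_⟩
  intro y hy
  obtain ⟨hy1, hy2⟩ := hy
  have h1y : (0:ℝ) < 1 - y := by linarith
  have hden : (0:ℝ) < 2*y - 1 := by linarith
  have hy0 : (0:ℝ) < y := by linarith
  have hone : (1:ℝ) ≤ (1-y)^(-(s/2)) :=
    Real.one_le_rpow_of_pos_of_le_one_of_nonpos h1y (by linarith) (by linarith)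
  have hrpow_nonneg : (0:ℝ) ≤ (1-y)^(-(s/2)) := Real.rpow_nonneg h1y.le _
  have h4s : (0:ℝ) < 4^s := Real.rpow_pos_of_pos (by norm_num) s
  rcases le_or_gt y (3/4) with hc | hc
  · -- MVT case
    have hd : ∀ t ∈ Set.Icc (1/4:ℝ) (3/4),
        HasDerivAt (fun u : ℝ => u^(-s)) ((-s) * t^(-s-1)) t := by
      intro t ht
      exact Real.hasDerivAt_rpow_const (Or.inl (by linarith [ht.1] : t ≠ 0))
    have hb : ∀ t ∈ Set.Icc (1/4:ℝ) (3/4), |(-s) * t^(-s-1)| ≤ M := by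
      intro t ht
      have ht0 : (0:ℝ) < t := by linarith [ht.1]
      rw [abs_mul, abs_neg, abs_of_nonneg hs0.le, abs_of_nonneg (Real.rpow_nonneg ht0.le _)]
      have h1 : t^(-s-1) ≤ 4^(s+1) := by
        have := rpow_le_four (s+1) ht.1 (by linarith)
        rwa [show -(s+1) = -s-1 by ring] at this
      rw [hM]
      exact mul_le_mul_of_nonneg_left h1 hs0.le
    have hmvt := mvt_pair _ _ M hd hb hy1 hc
    have hg0 : (0:ℝ) ≤ y*(1-y)/(2*y-1) := by positivity
    rw [abs_mul, abs_of_nonneg hg0]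
    have hgsmall : y*(1-y) ≤ 1 := by nlinarith
    calc y*(1-y)/(2*y-1) * |y^(-s) - (1-y)^(-s)|
        ≤ y*(1-y)/(2*y-1) * (M*(2*y-1)) := mul_le_mul_of_nonneg_left hmvt hg0
      _ = M * (y*(1-y)) := by rw [div_mul_eq_mul_div, div_eq_iff hden.ne']; ring
      _ ≤ M := by nlinarith
      _ = M * 1 := by ring
      _ ≤ (M + 4^s + 2) * (1-y)^(-(s/2)) := by
          apply mul_le_mul (by linarith) hone (by norm_num) (by positivity)
  · -- y > 3/4
    have hys : y^(-s) ≤ 4^s := rpow_le_four s (by linarith) hs0.le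
    have hg0 : (0:ℝ) ≤ y*(1-y)/(2*y-1) := by positivity
    have htri : |y^(-s) - (1-y)^(-s)| ≤ y^(-s) + (1-y)^(-s) := by
      calc |y^(-s) - (1-y)^(-s)| ≤ |y^(-s)| + |(1-y)^(-s)| := abs_sub _ _
        _ = y^(-s) + (1-y)^(-s) := by
            rw [abs_of_nonneg (Real.rpow_nonneg hy0.le _),
               abs_of_nonneg (Real.rpow_nonneg h1y.le _)]
    have habs : |y*(1-y)/(2*y-1) * (y^(-s) - (1-y)^(-s))|
        ≤ y*(1-y)/(2*y-1)*y^(-s) + y*(1-y)/(2*y-1)*(1-y)^(-s) := by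
      rw [abs_mul, abs_of_nonneg hg0, ← mul_add]
      exact mul_le_mul_of_nonneg_left htri hg0
    have hterm1 : y*(1-y)/(2*y-1)*y^(-s) ≤ 4^s := by
      have hgle : y*(1-y)/(2*y-1) ≤ 1 := by rw [div_le_one hden]; nlinarith
      calc y*(1-y)/(2*y-1)*y^(-s) ≤ 1 * (4^s) :=
            mul_le_mul hgle hys (Real.rpow_nonneg hy0.le _) zero_le_one
        _ = 4^s := one_mul _
    have hsplit : y*(1-y)/(2*y-1)*(1-y)^(-s) = y/(2*y-1)*(1-y)^(1-s) := by
      rw [show (1:ℝ)-s = 1 + -s by ring, Real.rpow_add h1y, Real.rpow_one]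
      field_simp
    have hterm2 : y/(2*y-1)*(1-y)^(1-s) ≤ 2*(1-y)^(-(s/2)) := by
      have ha1 : y/(2*y-1) ≤ 2 := by rw [div_le_iff₀ hden]; linarith
      have ha2 : (1-y)^(1-s) ≤ (1-y)^(-(s/2)) :=
        Real.rpow_le_rpow_of_exponent_ge h1y (by linarith) (by linarith)
      exact mul_le_mul ha1 ha2 (Real.rpow_nonneg h1y.le _) (by norm_num)
    calc |y*(1-y)/(2*y-1) * (y^(-s) - (1-y)^(-s))|
        ≤ y*(1-y)/(2*y-1)*y^(-s) + y*(1-y)/(2*y-1)*(1-y)^(-s) := habs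
      _ ≤ 4^s + 2*(1-y)^(-(s/2)) := by rw [hsplit]; exact add_le_add hterm1 hterm2
      _ ≤ (M + 4^s + 2) * (1-y)^(-(s/2)) := by
          nlinarith [mul_nonneg hM0 hrpow_nonneg, mul_le_mul_of_nonneg_left hone h4s.le]

set_option maxHeartbeats 1000000 in
lemma wfun_bound (s : ℝ) (hs0 : 0 < s) (hs2 : s < 2) :
    ∃ K, 0 ≤ K ∧ ∀ y ∈ Set.Ioo (1/2:ℝ) 1,
      |y*(1-y)/(2*y-1) * (y^(-s)*(-1+s*Real.log y) - (1-y)^(-s)*(-1+s*Real.log (1-y)))|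
        ≤ K * (1-y)^(-(s/2)) := by
  set ε : ℝ := (2-s)/2 with hε
  have hε0 : 0 < ε := by rw [hε]; linarith
  have hlog4 : (0:ℝ) ≤ Real.log 4 := Real.log_nonneg (by norm_num)
  set M : ℝ := s*4^(s+1)*(1+s*Real.log 4) + 4^s*(s*4) with hM
  have h4s : (0:ℝ) < 4^s := Real.rpow_pos_of_pos (by norm_num) s
  have h4s1 : (0:ℝ) < 4^(s+1) := Real.rpow_pos_of_pos (by norm_num) (s+1)
  have hM0 : 0 ≤ M := by positivity
  refine ⟨M + 4^s*(1+s*Real.log 4) + 2 + 2*(s/ε), by positivity, ?_⟩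
  intro y hy
  obtain ⟨hy1, hy2⟩ := hy
  have h1y : (0:ℝ) < 1 - y := by linarith
  have hden : (0:ℝ) < 2*y - 1 := by linarith
  have hy0 : (0:ℝ) < y := by linarith
  have hone : (1:ℝ) ≤ (1-y)^(-(s/2)) :=
    Real.one_le_rpow_of_pos_of_le_one_of_nonpos h1y (by linarith) (by linarith)
  have hrpow_nonneg : (0:ℝ) ≤ (1-y)^(-(s/2)) := Real.rpow_nonneg h1y.le _
  have hKnn : (0:ℝ) ≤ 4^s*(1+s*Real.log 4) := by positivity
  have hse : (0:ℝ) ≤ s/ε := by positivity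
  rcases le_or_gt y (3/4) with hc | hc
  · -- MVT case
    have hd : ∀ t ∈ Set.Icc (1/4:ℝ) (3/4),
        HasDerivAt (fun u : ℝ => u^(-s)*(-1+s*Real.log u))
          ((-s)*t^(-s-1)*(-1+s*Real.log t) + t^(-s)*(s*t⁻¹)) t := by
      intro t ht
      have ht0 : (0:ℝ) < t := by linarith [ht.1]
      exact (Real.hasDerivAt_rpow_const (Or.inl (ne_of_gt ht0))).mul
        (((Real.hasDerivAt_log (ne_of_gt ht0)).const_mul s).const_add (-1))
    have hb : ∀ t ∈ Set.Icc (1/4:ℝ) (3/4),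
        |(-s)*t^(-s-1)*(-1+s*Real.log t) + t^(-s)*(s*t⁻¹)| ≤ M := by
      intro t ht
      have ht0 : (0:ℝ) < t := by linarith [ht.1]
      have habs_log : |Real.log t| ≤ Real.log 4 := by
        rw [abs_le]
        constructor
        · have h' : Real.log (1/4) ≤ Real.log t :=
            (Real.log_le_log_iff (by norm_num) ht0).2 ht.1
          rwa [one_div, Real.log_inv] at h'
        · exact (Real.log_le_log_iff ht0 (by norm_num)).2 (le_trans ht.2 (by norm_num))
      have b1 : t^(-s-1) ≤ 4^(s+1) := by
        have := rpow_le_four (s+1) ht.1 (by linarith)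
        rwa [show -(s+1) = -s-1 by ring] at this
      have b2 : |(-1) + s*Real.log t| ≤ 1 + s*Real.log 4 := by
        calc |(-1) + s*Real.log t| ≤ |(-1:ℝ)| + |s*Real.log t| := abs_add_le _ _
          _ = 1 + s*|Real.log t| := by rw [abs_neg, abs_one, abs_mul, abs_of_nonneg hs0.le]
          _ ≤ 1 + s*Real.log 4 := by nlinarith [habs_log]
      have e1 : |(-s)*t^(-s-1)*(-1+s*Real.log t)| ≤ s*4^(s+1)*(1+s*Real.log 4) := by
        rw [abs_mul, abs_mul, abs_neg, abs_of_nonneg hs0.le,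
          abs_of_nonneg (Real.rpow_nonneg ht0.le _)]
        apply mul_le_mul (mul_le_mul le_rfl b1 (Real.rpow_nonneg ht0.le _) hs0.le) b2
          (abs_nonneg _) (by positivity)
      have e2 : |t^(-s)*(s*t⁻¹)| ≤ 4^s*(s*4) := by
        rw [abs_mul, abs_of_nonneg (Real.rpow_nonneg ht0.le _),
          abs_of_nonneg (by positivity : (0:ℝ) ≤ s*t⁻¹)]
        have h4 : t⁻¹ ≤ 4 := by
          rw [show (4:ℝ) = (1/4:ℝ)⁻¹ by norm_num]
          exact inv_anti₀ (by norm_num) ht.1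
        apply mul_le_mul (rpow_le_four s ht.1 hs0.le)
          (mul_le_mul_of_nonneg_left h4 hs0.le) (by positivity) h4s.le
      calc |(-s)*t^(-s-1)*(-1+s*Real.log t) + t^(-s)*(s*t⁻¹)|
          ≤ |(-s)*t^(-s-1)*(-1+s*Real.log t)| + |t^(-s)*(s*t⁻¹)| := abs_add_le _ _
        _ ≤ M := by rw [hM]; exact add_le_add e1 e2
    have hmvt := mvt_pair _ _ M hd hb hy1 hc
    have hg0 : (0:ℝ) ≤ y*(1-y)/(2*y-1) := by positivity
    rw [abs_mul, abs_of_nonneg hg0]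
    have hgsmall : y*(1-y) ≤ 1 := by nlinarith
    calc y*(1-y)/(2*y-1) *
          |y^(-s)*(-1+s*Real.log y) - (1-y)^(-s)*(-1+s*Real.log (1-y))|
        ≤ y*(1-y)/(2*y-1) * (M*(2*y-1)) := mul_le_mul_of_nonneg_left hmvt hg0
      _ = M * (y*(1-y)) := by rw [div_mul_eq_mul_div, div_eq_iff hden.ne']; ring
      _ ≤ M := by nlinarith
      _ = M * 1 := by ring
      _ ≤ (M + 4^s*(1+s*Real.log 4) + 2 + 2*(s/ε)) * (1-y)^(-(s/2)) := by
          apply mul_le_mul (by linarith) hone (by norm_num) (by positivity)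
  · -- y > 3/4
    have hg0 : (0:ℝ) ≤ y*(1-y)/(2*y-1) := by positivity
    have hgle : y*(1-y)/(2*y-1) ≤ 1 := by rw [div_le_one hden]; nlinarith
    have hy24 : y/(2*y-1) ≤ 2 := by rw [div_le_iff₀ hden]; linarith
    -- term A
    have habs_logy : |Real.log y| ≤ Real.log 4 := by
      rw [abs_le]
      constructor
      · have h' : Real.log (1/4) ≤ Real.log y :=
          (Real.log_le_log_iff (by norm_num) hy0).2 (by linarith)
        rwa [one_div, Real.log_inv] at h'
      · exact (Real.log_le_log_iff hy0 (by norm_num)).2 (by linarith)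
    have hA : |y^(-s)*(-1+s*Real.log y)| ≤ 4^s*(1+s*Real.log 4) := by
      rw [abs_mul, abs_of_nonneg (Real.rpow_nonneg hy0.le _)]
      apply mul_le_mul (rpow_le_four s (by linarith) hs0.le) ?_ (abs_nonneg _) h4s.le
      calc |(-1) + s*Real.log y| ≤ |(-1:ℝ)| + |s*Real.log y| := abs_add_le _ _
        _ = 1 + s*|Real.log y| := by rw [abs_neg, abs_one, abs_mul, abs_of_nonneg hs0.le]
        _ ≤ 1 + s*Real.log 4 := by nlinarith [habs_logy]
    -- term B
    have hlog_neg : Real.log (1-y) < 0 := Real.log_neg h1y (by linarith)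
    have hlogb : -Real.log (1-y) ≤ (1-y)^(-ε)/ε := by
      have h0 : (0:ℝ) ≤ (1-y)⁻¹ := by positivity
      have h' := Real.log_le_rpow_div h0 hε0
      rw [Real.log_inv] at h'
      rwa [Real.inv_rpow h1y.le, ← Real.rpow_neg h1y.le] at h'
    have hBle : |(1-y)^(-s)*(-1+s*Real.log (1-y))|
        ≤ (1-y)^(-s) + (s/ε) * ((1-y)^(-s) * (1-y)^(-ε)) := by
      rw [abs_mul, abs_of_nonneg (Real.rpow_nonneg h1y.le _),
        abs_of_nonpos (by nlinarith : (-1) + s*Real.log (1-y) ≤ 0)]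
      have hkey : -((-1) + s*Real.log (1-y)) ≤ 1 + (s/ε) * (1-y)^(-ε) := by
        have h2 := mul_le_mul_of_nonneg_left hlogb hs0.le
        have h3 : s * ((1-y)^(-ε)/ε) = (s/ε) * (1-y)^(-ε) := by ring
        nlinarith [h2, h3]
      calc (1-y)^(-s) * -((-1) + s*Real.log (1-y))
          ≤ (1-y)^(-s) * (1 + (s/ε) * (1-y)^(-ε)) :=
            mul_le_mul_of_nonneg_left hkey (Real.rpow_nonneg h1y.le _)
        _ = (1-y)^(-s) + (s/ε) * ((1-y)^(-s) * (1-y)^(-ε)) := by ring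
    have key1 : (1-y) * (1-y)^(-s) ≤ (1-y)^(-(s/2)) := by
      have : (1-y) * (1-y)^(-s) = (1-y)^(1 + -s) := by
        rw [Real.rpow_add h1y, Real.rpow_one]
      rw [this]
      exact Real.rpow_le_rpow_of_exponent_ge h1y (by linarith) (by linarith)
    have key2 : (1-y) * ((1-y)^(-s) * (1-y)^(-ε)) = (1-y)^(-(s/2)) := by
      rw [← Real.rpow_add h1y, ← Real.rpow_one_add' (by linarith) ?hx]
      · congr 1; rw [hε]; ring
      · rw [hε]; intro hcon; linarith [hcon]
    have htri : |y*(1-y)/(2*y-1) * (y^(-s)*(-1+s*Real.log y) - (1-y)^(-s)*(-1+s*Real.log (1-y)))|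
        ≤ y*(1-y)/(2*y-1) * |y^(-s)*(-1+s*Real.log y)|
          + y*(1-y)/(2*y-1) * |(1-y)^(-s)*(-1+s*Real.log (1-y))| := by
      rw [abs_mul, abs_of_nonneg hg0, ← mul_add]
      exact mul_le_mul_of_nonneg_left (abs_sub _ _) hg0
    have t1 : y*(1-y)/(2*y-1) * |y^(-s)*(-1+s*Real.log y)| ≤ 4^s*(1+s*Real.log 4) := by
      calc y*(1-y)/(2*y-1) * |y^(-s)*(-1+s*Real.log y)| ≤ 1 * (4^s*(1+s*Real.log 4)) :=
            mul_le_mul hgle hA (abs_nonneg _) zero_le_one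
        _ = 4^s*(1+s*Real.log 4) := one_mul _
    have hIB : (1-y)*|(1-y)^(-s)*(-1+s*Real.log (1-y))| ≤ (1 + s/ε) * (1-y)^(-(s/2)) := by
      calc (1-y)*|(1-y)^(-s)*(-1+s*Real.log (1-y))|
          ≤ (1-y)*((1-y)^(-s) + (s/ε) * ((1-y)^(-s) * (1-y)^(-ε))) :=
            mul_le_mul_of_nonneg_left hBle h1y.le
        _ = (1-y)*(1-y)^(-s) + (s/ε)*((1-y)*((1-y)^(-s)*(1-y)^(-ε))) := by ring
        _ ≤ (1-y)^(-(s/2)) + (s/ε)*(1-y)^(-(s/2)) := by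
            rw [key2]; exact add_le_add key1 le_rfl
        _ = (1 + s/ε) * (1-y)^(-(s/2)) := by ring
    have t2 : y*(1-y)/(2*y-1) * |(1-y)^(-s)*(-1+s*Real.log (1-y))|
        ≤ (2 + 2*(s/ε)) * (1-y)^(-(s/2)) := by
      have e : y*(1-y)/(2*y-1)*|(1-y)^(-s)*(-1+s*Real.log (1-y))|
          = y/(2*y-1) * ((1-y)*|(1-y)^(-s)*(-1+s*Real.log (1-y))|) := by ring
      rw [e]
      calc y/(2*y-1) * ((1-y)*|(1-y)^(-s)*(-1+s*Real.log (1-y))|)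
          ≤ 2 * ((1 + s/ε) * (1-y)^(-(s/2))) :=
            mul_le_mul hy24 hIB (by positivity) (by norm_num)
        _ = (2 + 2*(s/ε)) * (1-y)^(-(s/2)) := by ring
    calc |y*(1-y)/(2*y-1) * (y^(-s)*(-1+s*Real.log y) - (1-y)^(-s)*(-1+s*Real.log (1-y)))|
        ≤ y*(1-y)/(2*y-1) * |y^(-s)*(-1+s*Real.log y)|
          + y*(1-y)/(2*y-1) * |(1-y)^(-s)*(-1+s*Real.log (1-y))| := htri
      _ ≤ 4^s*(1+s*Real.log 4) + (2 + 2*(s/ε)) * (1-y)^(-(s/2)) := add_le_add t1 t2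
      _ ≤ (M + 4^s*(1+s*Real.log 4) + 2 + 2*(s/ε)) * (1-y)^(-(s/2)) := by
          nlinarith [mul_nonneg hM0 hrpow_nonneg, mul_le_mul_of_nonneg_left hone hKnn,
            mul_nonneg hse hrpow_nonneg]

lemma hfun_cont (s : ℝ) : ∀ x ∈ Set.Ioo (1/2:ℝ) 1,
    ContinuousAt (fun x : ℝ => x*(1-x)/(2*x-1) * (x^(-s) - (1-x)^(-s))) x := by
  intro x hx
  obtain ⟨h1, h2⟩ := hx
  have hx0 : x ≠ 0 := by intro h; rw [h] at h1; norm_num at h1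
  have h1x : (1:ℝ) - x ≠ 0 := by intro h; linarith
  have hd : 2*x - 1 ≠ 0 := by intro h; linarith
  apply ContinuousAt.mul
  · exact ContinuousAt.div (by fun_prop) (by fun_prop) hd
  · apply ContinuousAt.sub
    · exact Real.continuousAt_rpow_const x (-s) (Or.inl hx0)
    · exact ContinuousAt.comp (Real.continuousAt_rpow_const (1-x) (-s) (Or.inl h1x))
        (by fun_prop)

lemma wfun_cont (s : ℝ) : ∀ x ∈ Set.Ioo (1/2:ℝ) 1,
    ContinuousAt (fun x : ℝ =>
      x*(1-x)/(2*x-1) * (x^(-s)*(-1+s*Real.log x) - (1-x)^(-s)*(-1+s*Real.log (1-x)))) x := by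
  intro x hx
  obtain ⟨h1, h2⟩ := hx
  have hx0 : x ≠ 0 := by intro h; rw [h] at h1; norm_num at h1
  have h1x : (1:ℝ) - x ≠ 0 := by intro h; linarith
  have hd : 2*x - 1 ≠ 0 := by intro h; linarith
  apply ContinuousAt.mul
  · exact ContinuousAt.div (by fun_prop) (by fun_prop) hd
  · apply ContinuousAt.sub
    · apply ContinuousAt.mul
      · exact Real.continuousAt_rpow_const x (-s) (Or.inl hx0)
      · apply ContinuousAt.add continuousAt_const
        exact continuousAt_const.mul (Real.continuousAt_log hx0)
    · apply ContinuousAt.mul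
      · exact ContinuousAt.comp (Real.continuousAt_rpow_const (1-x) (-s) (Or.inl h1x))
          (by fun_prop)
      · apply ContinuousAt.add continuousAt_const
        exact continuousAt_const.mul
          (ContinuousAt.comp (Real.continuousAt_log h1x) (by fun_prop))

lemma per_p (s n P : ℝ) (hn : 0 < n) (hP : 0 < P) (hQ : 0 < n - P) (hD : 2*P - n ≠ 0) :
    P*(n-P)/(2*P-n) * (P^(-s)*(-1+s*Real.log P) - (n-P)^(-s)*(-1+s*Real.log (n-P)))
    = n^(1-s) * (s * Real.log n *
        (P/n*(1-P/n)/(2*(P/n)-1) * ((P/n)^(-s) - (1-P/n)^(-s)))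
      + P/n*(1-P/n)/(2*(P/n)-1) *
          ((P/n)^(-s)*(-1+s*Real.log (P/n)) - (1-P/n)^(-s)*(-1+s*Real.log (1-P/n)))) := by
  have h1 : 1 - P/n = (n-P)/n := by field_simp
  have h2 : 2*(P/n) - 1 = (2*P-n)/n := by field_simp
  rw [h1, h2, Real.div_rpow hP.le hn.le, Real.div_rpow hQ.le hn.le,
    Real.log_div (ne_of_gt hP) (ne_of_gt hn), Real.log_div (ne_of_gt hQ) (ne_of_gt hn),
    show (1:ℝ)-s = 1 + -s by ring, Real.rpow_add hn, Real.rpow_one]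
  have hns : (0:ℝ) < n^(-s) := Real.rpow_pos_of_pos hn _
  field_simp
  ring
lemma sum_dist {α : Type*} (t : Finset α) (c d : ℝ) (F W : α → ℝ) :
    ∑ p ∈ t, (c * (d * F p + W p)) = c * d * (∑ p ∈ t, F p) + c * (∑ p ∈ t, W p) := by
  rw [Finset.mul_sum, Finset.mul_sum, ← Finset.sum_add_distrib]
  exact Finset.sum_congr rfl fun p _ => by ring

set_option maxHeartbeats 1000000 in
theorem stmt1 (s : ℝ) (hs0 : 0 < s) (hs2 : s < 2) :
    MeasureTheory.IntegrableOn
        (fun x : ℝ => x * (1 - x) / (2 * x - 1) * (x ^ (-s) - (1 - x) ^ (-s)))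
        (Set.Ioo (1 / 2 : ℝ) 1) ∧
      Filter.Tendsto
        (fun r : ℕ =>
          (∑ p ∈ Finset.Icc (r + 1) (2 * r),
            ((p : ℝ) * (2 * (r : ℝ) + 1 - (p : ℝ)) / (2 * (p : ℝ) - 2 * (r : ℝ) - 1)) *
              ((p : ℝ) ^ (-s) * (-1 + s * Real.log (p : ℝ)) -
                (2 * (r : ℝ) + 1 - (p : ℝ)) ^ (-s) *
                  (-1 + s * Real.log (2 * (r : ℝ) + 1 - (p : ℝ))))) /
            ((2 * (r : ℝ) + 1) ^ (2 - s) * Real.log (2 * (r : ℝ) + 1)))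
        Filter.atTop
        (nhds (s * ∫ x in Set.Ioo (1 / 2 : ℝ) 1,
          x * (1 - x) / (2 * x - 1) * (x ^ (-s) - (1 - x) ^ (-s)))) := by
  obtain ⟨Kh, hKh0, hKh⟩ := hfun_bound s hs0 hs2
  obtain ⟨Kw, hKw0, hKw⟩ := wfun_bound s hs0 hs2
  have has0 : (0:ℝ) ≤ s/2 := by linarith
  have has1 : s/2 < 1 := by linarith
  obtain ⟨hint, hlimh⟩ := riemann
    (fun x : ℝ => x*(1-x)/(2*x-1) * (x^(-s) - (1-x)^(-s)))
    Kh (s/2) hKh0 has0 has1 (hfun_cont s) hKh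
  obtain ⟨_, hlimw⟩ := riemann
    (fun x : ℝ => x*(1-x)/(2*x-1) * (x^(-s)*(-1+s*Real.log x) - (1-x)^(-s)*(-1+s*Real.log (1-x))))
    Kw (s/2) hKw0 has0 has1 (wfun_cont s) hKw
  refine ⟨hint, ?_⟩
  have h2 : Tendsto (fun r : ℕ => (2*(r:ℝ)+1)) atTop atTop :=
    tendsto_atTop_add_const_right _ 1
      ((tendsto_natCast_atTop_atTop (R := ℝ)).const_mul_atTop (by norm_num : (0:ℝ) < 2))
  have hln : Tendsto (fun r : ℕ => Real.log (2*(r:ℝ)+1)) atTop atTop :=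
    Real.tendsto_log_atTop.comp h2
  have hln0 : Tendsto (fun r : ℕ => (Real.log (2*(r:ℝ)+1))⁻¹) atTop (𝓝 0) :=
    hln.inv_tendsto_atTop
  have main := (hlimh.const_mul s).add (hlimw.mul hln0)
  rw [mul_zero, add_zero] at main
  refine Tendsto.congr' ?_ main
  filter_upwards [eventually_ge_atTop 1] with r hr
  have hn : (0:ℝ) < 2*(r:ℝ)+1 := by positivity
  have hr1 : (1:ℝ) ≤ (r:ℝ) := by exact_mod_cast hr
  have hln_pos : 0 < Real.log (2*(r:ℝ)+1) := Real.log_pos (by linarith)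
  have hnp : (0:ℝ) < (2*(r:ℝ)+1)^((1:ℝ)-s) := Real.rpow_pos_of_pos hn _
  have hpow : (2*(r:ℝ)+1)^((2:ℝ)-s) = (2*(r:ℝ)+1)^((1:ℝ)-s) * (2*(r:ℝ)+1) := by
    rw [show (2:ℝ)-s = ((1:ℝ)-s)+1 by ring, Real.rpow_add hn, Real.rpow_one]
  have hsum : (∑ p ∈ Finset.Icc (r + 1) (2 * r),
      ((p : ℝ) * (2 * (r : ℝ) + 1 - (p : ℝ)) / (2 * (p : ℝ) - 2 * (r : ℝ) - 1)) *
        ((p : ℝ) ^ (-s) * (-1 + s * Real.log (p : ℝ)) -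
          (2 * (r : ℝ) + 1 - (p : ℝ)) ^ (-s) *
            (-1 + s * Real.log (2 * (r : ℝ) + 1 - (p : ℝ)))))
      = (2*(r:ℝ)+1)^((1:ℝ)-s) * (s * Real.log (2*(r:ℝ)+1)) *
          (∑ p ∈ Finset.Icc (r + 1) (2 * r),
            (fun x : ℝ => x*(1-x)/(2*x-1) * (x^(-s) - (1-x)^(-s))) ((p:ℝ)/(2*(r:ℝ)+1)))
        + (2*(r:ℝ)+1)^((1:ℝ)-s) * (∑ p ∈ Finset.Icc (r + 1) (2 * r),
            (fun x : ℝ => x*(1-x)/(2*x-1) *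
              (x^(-s)*(-1+s*Real.log x) - (1-x)^(-s)*(-1+s*Real.log (1-x))))
              ((p:ℝ)/(2*(r:ℝ)+1))) := by
    rw [← sum_dist]
    apply Finset.sum_congr rfl
    intro p hp
    obtain ⟨hp1, hp2⟩ := Finset.mem_Icc.1 hp
    have hp1' : (r:ℝ) + 1 ≤ (p:ℝ) := by exact_mod_cast hp1
    have hp2' : (p:ℝ) ≤ 2*(r:ℝ) := by exact_mod_cast hp2
    have hP : (0:ℝ) < (p:ℝ) := by linarith
    have hQ : (0:ℝ) < 2*(r:ℝ)+1 - (p:ℝ) := by linarith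
    have hD : 2*(p:ℝ) - (2*(r:ℝ)+1) ≠ 0 := by intro h; linarith [h]
    have hper := per_p s (2*(r:ℝ)+1) (p:ℝ) hn hP hQ hD
    rw [show 2*(p:ℝ) - 2*(r:ℝ) - 1 = 2*(p:ℝ) - (2*(r:ℝ)+1) by ring]
    simp only []
    rw [hper]
  rw [hsum, hpow]
  have key : ∀ A B L N P : ℝ, 0 < L → 0 < N → 0 < P →
      s * (A / N) + B / N * L⁻¹ = (P * (s * L) * A + P * B) / (P * N * L) := by
    intro A B L N P hL hN hP
    field_simp
  exact key _ _ _ _ _ hln_pos hn hnp
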